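/- In the repeated solicitation model with Poisson(v) prior, Var(Y) = v·E[J(T)] + v²·Var(R(T)), where J(k) = Σ_{n=1}^k π_n (1 - π_n v (1 - λ_n)/λ_n) and R(k) = Σ_{n=1}^{k-1} π_n/λ_n (with R(1) = 0). -/

import Mathlib

set_option linter.unusedSectionVars false
open MeasureTheory ProbabilityTheory
open scoped ENNReal NNReal

noncomputable def ppmf (a : ℝ) (m : ℕ) : ℝ := Real.exp (-a) * a ^ m / m.factorial

lemma hs_exp (a : ℝ) : HasSum (fun m : ℕ => a ^ m / m.factorial) (Real.exp a) := by
  rw [Real.exp_eq_exp_ℝ]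
  exact NormedSpace.expSeries_div_hasSum_exp a

lemma hs_ppmf (a : ℝ) : HasSum (ppmf a) 1 := by
  have h := (hs_exp a).mul_left (Real.exp (-a))
  have : Real.exp (-a) * Real.exp a = 1 := by
    rw [← Real.exp_add]; simp
  rw [this] at h
  convert h using 3 with m
  · rfl
  rw [ppmf, mul_div_assoc]

lemma hs_ppmf_mom1 (a : ℝ) : HasSum (fun m : ℕ => (m : ℝ) * ppmf a m) a := by
  have h := (hs_exp a).mul_left (Real.exp (-a) * a)
  have h2 : Real.exp (-a) * a * Real.exp a = a := by
    rw [mul_comm (Real.exp (-a)) a, mul_assoc, ← Real.exp_add]; simp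
  rw [h2] at h
  have h3 : HasSum (fun m : ℕ => ((m + 1 : ℕ) : ℝ) * ppmf a (m + 1)) a := by
    convert h using 2 with m
    · rfl
    rw [ppmf]
    push_cast [Nat.factorial_succ, pow_succ]
    have hm : ((m : ℝ) + 1) ≠ 0 := by positivity
    field_simp
  have h4 := (hasSum_nat_add_iff (f := fun m : ℕ => (m : ℝ) * ppmf a m) 1).mp h3
  simpa using h4

lemma hs_ppmf_mom2 (a : ℝ) : HasSum (fun m : ℕ => (m : ℝ) ^ 2 * ppmf a m) (a + a ^ 2) := by
  have h := (hs_exp a).mul_left (Real.exp (-a) * a ^ 2)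
  have h2 : Real.exp (-a) * a ^ 2 * Real.exp a = a ^ 2 := by
    rw [mul_comm (Real.exp (-a)) (a ^ 2), mul_assoc, ← Real.exp_add]; simp
  rw [h2] at h
  have h3 : HasSum (fun m : ℕ => ((m + 2 : ℕ) : ℝ) * ((m + 1 : ℕ) : ℝ) * ppmf a (m + 2)) (a ^ 2) := by
    convert h using 2 with m
    · rfl
    rw [ppmf]
    push_cast [Nat.factorial_succ, pow_succ]
    have hm1 : ((m : ℝ) + 1) ≠ 0 := by positivity
    have hm2 : ((m : ℝ) + 2) ≠ 0 := by positivity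
    field_simp
    ring
  have h4 := (hasSum_nat_add_iff (f := fun m : ℕ => (m : ℝ) * ((m : ℝ) - 1) * ppmf a m) 2).mp
    (by convert h3 using 3 with m; rfl; push_cast; ring)
  have hsum0 : ∑ m ∈ Finset.range 2, (m : ℝ) * ((m : ℝ) - 1) * ppmf a m = 0 := by
    norm_num [Finset.sum_range_succ]
  rw [hsum0, add_zero, h2] at h4
  have h5 := h4.add (hs_ppmf_mom1 a)
  have h6 : a ^ 2 + a = a + a ^ 2 := by ring
  rw [h6] at h5
  convert h5 using 3 with m
  · rfl
  ring

lemma hs_ppmf_pos (a : ℝ) :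
    HasSum (fun m : ℕ => (if m = 0 then (0 : ℝ) else 1) * ppmf a m) (1 - Real.exp (-a)) := by
  have h0 : ppmf a 0 = Real.exp (-a) := by simp [ppmf]
  have h1 : HasSum (fun m : ℕ => ppmf a (m + 1)) (1 - Real.exp (-a)) := by
    refine (hasSum_nat_add_iff (f := ppmf a) 1).mpr ?_
    simpa [h0] using hs_ppmf a
  have h3 : HasSum (fun m : ℕ =>
      (if m + 1 = 0 then (0 : ℝ) else 1) * ppmf a (m + 1)) (1 - Real.exp (-a)) := by
    simpa using h1
  have h4 := (hasSum_nat_add_iff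
    (f := fun m : ℕ => (if m = 0 then (0 : ℝ) else 1) * ppmf a m) 1).mp h3
  simpa using h4

lemma ofReal_tsum_hasSum {f : ℕ → ℝ} {s : ℝ} (h : HasSum f s) (hf : ∀ m, 0 ≤ f m) :
    ∑' m, ENNReal.ofReal (f m) = ENNReal.ofReal s := by
  rw [← h.tsum_eq]
  exact (ENNReal.ofReal_tsum_of_nonneg hf h.summable).symm

lemma lintegral_comp_nat {Ω : Type*} [MeasurableSpace Ω] (μ : Measure Ω)
    {f : Ω → ℕ} (hf : Measurable f) (g : ℕ → ℝ≥0∞) :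
    ∫⁻ ω, g (f ω) ∂μ = ∑' m, g m * μ {ω | f ω = m} := by
  have hpt : ∀ ω, g (f ω) = ∑' m, Set.indicator {ω | f ω = m} (fun _ => g m) ω := by
    intro ω
    rw [tsum_eq_single (f ω)]
    · simp [Set.indicator_of_mem, Set.mem_setOf_eq]
    · intro m hm
      simp only [Set.indicator_apply, Set.mem_setOf_eq]
      rw [if_neg]
      exact fun h => hm h.symm
  calc ∫⁻ ω, g (f ω) ∂μ = ∫⁻ ω, ∑' m, Set.indicator {ω | f ω = m} (fun _ => g m) ω ∂μ := by
        exact lintegral_congr hpt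
    _ = ∑' m, ∫⁻ ω, Set.indicator {ω | f ω = m} (fun _ => g m) ω ∂μ := by
        refine lintegral_tsum fun m => ?_
        exact ((measurable_const).indicator (hf (measurableSet_singleton m))).aemeasurable
    _ = ∑' m, g m * μ {ω | f ω = m} := by
        refine tsum_congr fun m => ?_
        rw [lintegral_indicator_const (s := {ω | f ω = m}) (hf (measurableSet_singleton m))]


lemma lintegral_indep_prod {Ω : Type*} [MeasurableSpace Ω] (μ : Measure Ω)
    [IsProbabilityMeasure μ] {ι : Type*} (F : ι → Ω → ℝ≥0∞) (hFm : ∀ i, Measurable (F i))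
    (hFi : iIndepFun F μ) (s : Finset ι) :
    ∫⁻ ω, ∏ i ∈ s, F i ω ∂μ = ∏ i ∈ s, ∫⁻ ω, F i ω ∂μ := by
  classical
  induction s using Finset.induction_on with
  | empty => simp
  | insert a s ha ih =>
    rw [Finset.prod_insert ha]
    have hindep : IndepFun (∏ j ∈ s, F j) (F a) μ :=
      hFi.indepFun_finset_prod_of_notMem hFm ha
    have hmeas : Measurable (∏ j ∈ s, F j) := by
      rw [show (∏ j ∈ s, F j) = fun ω => ∏ j ∈ s, F j ω from funext fun ω => Finset.prod_apply ω s F]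
      exact Finset.measurable_prod s fun i _ => hFm i
    have h2 := lintegral_mul_eq_lintegral_mul_lintegral_of_indepFun'' hmeas.aemeasurable
      (hFm a).aemeasurable hindep
    simp only [Finset.prod_apply] at h2
    have e1 : (∫⁻ ω, F a ω * ∏ i ∈ s, F i ω ∂μ) = ∫⁻ ω, (∏ i ∈ s, F i ω) * F a ω ∂μ := by
      simp_rw [mul_comm]
    rw [show (∫⁻ ω, ∏ i ∈ insert a s, F i ω ∂μ) = ∫⁻ ω, F a ω * ∏ i ∈ s, F i ω ∂μ from
      lintegral_congr fun ω => by rw [Finset.prod_insert ha], e1, h2, ih, mul_comm]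

lemma sum_Ico_one_eq_tsum (f : ℕ → ℝ≥0∞) (k : ℕ) :
    ∑ n ∈ Finset.Ico 1 k, f n = ∑' i : ℕ, if i + 1 < k then f (i + 1) else 0 := by
  rw [Finset.sum_Ico_eq_sum_range]
  rw [tsum_eq_sum (s := Finset.range (k - 1))
    (by intro i hi; rw [Finset.mem_range] at hi; rw [if_neg]; omega)]
  refine Finset.sum_congr rfl fun i hi => ?_
  rw [Finset.mem_range] at hi
  rw [if_pos (by omega), add_comm]

lemma prod_split₂ {M : Type*} [CommMonoid M] (f : ℕ → M) {s : Finset ℕ} {i j : ℕ}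
    (hi : i ∈ s) (hj : j ∈ s) (hij : i ≠ j) :
    ∏ t ∈ s, f t = f i * f j * ∏ t ∈ (s.erase i).erase j, f t := by
  rw [← Finset.mul_prod_erase s f hi, ← Finset.mul_prod_erase (s.erase i) f
    (Finset.mem_erase.mpr ⟨hij.symm, hj⟩), mul_assoc]


section Model
variable {Ω : Type*} [MeasurableSpace Ω] (μ : Measure Ω) [IsProbabilityMeasure μ]
variable (π : ℕ → ℝ) (v : ℝ) (X : ℕ → Ω → ℕ) (T : Ω → ℕ)

-- T characterization lemmas
lemma T_lt_iff (hT : ∀ ω, T ω = sInf {n | 1 ≤ n ∧ X n ω = 0})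
    {ω : Ω} (hg : ∃ n, 1 ≤ n ∧ X n ω = 0) (i : ℕ) :
    i < T ω ↔ ∀ j, 1 ≤ j → j ≤ i → X j ω ≠ 0 := by
  have hne : {n | 1 ≤ n ∧ X n ω = 0}.Nonempty := hg
  constructor
  · intro h j h1 h2 hXj
    have : j ∉ {n | 1 ≤ n ∧ X n ω = 0} := Nat.notMem_of_lt_sInf (by rw [← hT]; omega)
    exact this ⟨h1, hXj⟩
  · intro h
    by_contra hc
    push_neg at hc
    have hmem := Nat.sInf_mem hne
    rw [← hT] at hmem
    exact h (T ω) hmem.1 (by omega) hmem.2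

lemma T_mem (hT : ∀ ω, T ω = sInf {n | 1 ≤ n ∧ X n ω = 0})
    {ω : Ω} (hg : ∃ n, 1 ≤ n ∧ X n ω = 0) : 1 ≤ T ω ∧ X (T ω) ω = 0 := by
  have hmem := Nat.sInf_mem (s := {n | 1 ≤ n ∧ X n ω = 0}) hg
  rw [← hT] at hmem
  exact hmem

lemma T_measurable (hXm : ∀ n, Measurable (X n))
    (hT : ∀ ω, T ω = sInf {n | 1 ≤ n ∧ X n ω = 0}) : Measurable T := by
  apply measurable_to_countable'
  intro k
  have hiff : ∀ ω, T ω = k ↔ ((k = 0 ∧ ∀ n, 1 ≤ n → X n ω ≠ 0) ∨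
      (1 ≤ k ∧ X k ω = 0 ∧ ∀ j, 1 ≤ j → j < k → X j ω ≠ 0)) := by
    intro ω
    constructor
    · intro h
      rcases Nat.eq_zero_or_pos k with hk | hk
      · subst hk
        left
        refine ⟨rfl, fun n h1 hXn => ?_⟩
        have hne : {n | 1 ≤ n ∧ X n ω = 0}.Nonempty := ⟨n, h1, hXn⟩
        have := Nat.sInf_mem hne
        rw [← hT, h] at this
        exact absurd this.1 (by decide)
      · right
        have hne : {n | 1 ≤ n ∧ X n ω = 0}.Nonempty := by
          by_contra hc
          rw [Set.not_nonempty_iff_eq_empty] at hc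
          rw [hT, hc, Nat.sInf_empty] at h
          omega
        have hmem := T_mem X T hT hne
        refine ⟨by omega, by rw [← h]; exact hmem.2, fun j h1 hj hXj => ?_⟩
        have := (T_lt_iff X T hT hne (k - 1)).mp (by omega) j h1 (by omega)
        exact this hXj
    · rintro (⟨hk, hall⟩ | ⟨hk, hXk, hmin⟩)
      · subst hk
        rw [hT]
        convert Nat.sInf_empty
        rw [Set.eq_empty_iff_forall_notMem]
        rintro n ⟨h1, h0⟩
        exact hall n h1 h0
      · have hne : {n | 1 ≤ n ∧ X n ω = 0}.Nonempty := ⟨k, hk, hXk⟩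
        have h1 := (T_lt_iff X T hT hne (k - 1)).mpr (fun j hj1 hj2 => hmin j hj1 (by omega))
        have h2 : T ω ≤ k := by rw [hT]; exact Nat.sInf_le ⟨hk, hXk⟩
        omega
  have : T ⁻¹' {k} = ((⋂ n, {ω | k = 0 ∧ (1 ≤ n → X n ω ≠ 0)}) ∪
      ({ω | 1 ≤ k ∧ X k ω = 0} ∩ ⋂ j, {ω | 1 ≤ j → j < k → X j ω ≠ 0})) := by
    ext ω
    simp only [Set.mem_preimage, Set.mem_singleton_iff, hiff ω, Set.mem_union, Set.mem_iInter,
      Set.mem_inter_iff, Set.mem_setOf_eq]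
    constructor
    · rintro (⟨h0, hall⟩ | ⟨h1, h2, h3⟩)
      · exact Or.inl fun n => ⟨h0, fun h => hall n h⟩
      · exact Or.inr ⟨⟨h1, h2⟩, fun j => h3 j⟩
    · rintro (h | ⟨⟨h1, h2⟩, h3⟩)
      · exact Or.inl ⟨(h 0).1, fun n hn => (h n).2 hn⟩
      · exact Or.inr ⟨h1, h2, fun j => h3 j⟩
  rw [this]
  apply MeasurableSet.union
  · refine MeasurableSet.iInter fun n => ?_
    by_cases hk : k = 0 <;> by_cases hn : 1 ≤ n
    · simp only [hk, hn, true_and, forall_true_left]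
      have : {ω | True ∧ (True → X n ω ≠ 0)} = {ω | X n ω ≠ 0} := by
        ext ω; simp
      refine MeasurableSet.congr ((hXm n (measurableSet_singleton 0)).compl) ?_
      ext ω; simp [hk, hn]
    · refine MeasurableSet.congr MeasurableSet.univ ?_
      ext ω; simp [hk]; omega
    · refine MeasurableSet.congr (MeasurableSet.empty) ?_
      ext ω; simp [hk]
    · refine MeasurableSet.congr (MeasurableSet.empty) ?_
      ext ω; simp [hk]
  · apply MeasurableSet.inter
    · by_cases hk : 1 ≤ k
      · refine MeasurableSet.congr (hXm k (measurableSet_singleton 0)) ?_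
        ext ω; simp [hk]
      · refine MeasurableSet.congr (MeasurableSet.empty) ?_
        ext ω; simp [hk]
    · refine MeasurableSet.iInter fun j => ?_
      by_cases hj : 1 ≤ j ∧ j < k
      · refine MeasurableSet.congr ((hXm j (measurableSet_singleton 0)).compl) ?_
        ext ω; simp [hj.1, hj.2]
      · refine MeasurableSet.congr MeasurableSet.univ ?_
        ext ω
        simp only [Set.mem_univ, Set.mem_setOf_eq, true_iff]
        intro h1 h2
        exact absurd ⟨h1, h2⟩ hj

lemma Y_measurable (hXm : ∀ n, Measurable (X n)) (hTm : Measurable T)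
    (Y : Ω → ℕ) (hY : ∀ ω, Y ω = ∑ n ∈ Finset.Ico 1 (T ω), X n ω) : Measurable Y := by
  apply measurable_to_countable'
  intro m
  have : Y ⁻¹' {m} = ⋃ k, (T ⁻¹' {k} ∩ {ω | ∑ n ∈ Finset.Ico 1 k, X n ω = m}) := by
    ext ω
    simp only [Set.mem_preimage, Set.mem_singleton_iff, Set.mem_iUnion, Set.mem_inter_iff,
      Set.mem_setOf_eq]
    constructor
    · intro h
      exact ⟨T ω, rfl, by rw [← h, hY]⟩
    · rintro ⟨k, hk, hsum⟩
      rw [hY, hk, hsum]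
  rw [this]
  refine MeasurableSet.iUnion fun k => (hTm (measurableSet_singleton k)).inter ?_
  exact (Finset.measurable_sum _ fun n _ => hXm n) (measurableSet_singleton m)

end Model


lemma ppmf_nonneg {a : ℝ} (ha : 0 ≤ a) (m : ℕ) : 0 ≤ ppmf a m := by
  rw [ppmf]; positivity

section SingleInt
variable {Ω : Type*} [MeasurableSpace Ω] (μ : Measure Ω) [IsProbabilityMeasure μ]
  (π : ℕ → ℝ) (v : ℝ) (X : ℕ → Ω → ℕ)

lemma int_of_hasSum (hπ : ∀ n, 1 ≤ n → 0 < π n) (hv : 0 < v)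
    (hXm : ∀ n, Measurable (X n))
    (hX : ∀ n, 1 ≤ n → ∀ m : ℕ, μ {ω | X n ω = m}
        = ENNReal.ofReal (Real.exp (-(π n * v)) * (π n * v) ^ m / m.factorial))
    (t : ℕ) (gR : ℕ → ℝ) (hgR : ∀ m, 0 ≤ gR m) {s : ℝ}
    (hs : HasSum (fun m => gR m * ppmf (π (t + 1) * v) m) s) :
    ∫⁻ ω, ENNReal.ofReal (gR (X (t + 1) ω)) ∂μ = ENNReal.ofReal s := by
  rw [lintegral_comp_nat μ (hXm (t + 1)) (fun m => ENNReal.ofReal (gR m))]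
  have hrw : ∀ m : ℕ, ENNReal.ofReal (gR m) * μ {ω | X (t + 1) ω = m}
      = ENNReal.ofReal (gR m * ppmf (π (t + 1) * v) m) := by
    intro m
    rw [hX (t + 1) (by omega) m, ← ENNReal.ofReal_mul (hgR m)]
    rfl
  simp_rw [hrw]
  exact ofReal_tsum_hasSum hs (fun m =>
    mul_nonneg (hgR m) (ppmf_nonneg (mul_pos (hπ (t + 1) (by omega)) hv).le m))

end SingleInt

noncomputable def dlt : ℕ → ℝ≥0∞ := fun m => if m = 0 then 0 else 1

noncomputable def Dfun {Ω : Type*} (X : ℕ → Ω → ℕ) (k : ℕ) (ω : Ω) : ℝ≥0∞ :=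
  ∏ t ∈ Finset.range k, dlt (X (t + 1) ω)

noncomputable def LamF (lam : ℕ → ℝ) (k : ℕ) : ℝ≥0∞ :=
  ∏ t ∈ Finset.range k, ENNReal.ofReal (lam (t + 1))

noncomputable def gYF (i t m : ℕ) : ℝ≥0∞ := if t = i then (m : ℝ≥0∞) else dlt m

noncomputable def gpF (p : ℕ × ℕ) (t m : ℕ) : ℝ≥0∞ :=
  if t = p.1 then (if t = p.2 then (m : ℝ≥0∞) ^ 2 else (m : ℝ≥0∞))
  else if t = p.2 then (m : ℝ≥0∞) else dlt m

set_option maxHeartbeats 1600000 in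
theorem variance_of_total_yield
    {Ω : Type*} [MeasurableSpace Ω] (μ : Measure Ω) [IsProbabilityMeasure μ]
    (π : ℕ → ℝ) (hπ : ∀ n, 1 ≤ n → 0 < π n) (hπsum : ∑' n : ℕ, π (n + 1) ≤ 1)
    (v : ℝ) (hv : 0 < v)
    (X : ℕ → Ω → ℕ) (hXm : ∀ n, Measurable (X n))
    (hindep : iIndepFun (fun n : ℕ => X (n + 1)) μ)
    (hX : ∀ n, 1 ≤ n → ∀ m : ℕ, μ {ω | X n ω = m}
        = ENNReal.ofReal (Real.exp (-(π n * v)) * (π n * v) ^ m / m.factorial))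
    (T : Ω → ℕ) (hT : ∀ ω, T ω = sInf {n | 1 ≤ n ∧ X n ω = 0})
    (hTfin : ∀ᵐ ω ∂μ, ∃ n, 1 ≤ n ∧ X n ω = 0)
    (Y : Ω → ℕ) (hY : ∀ ω, Y ω = ∑ n ∈ Finset.Ico 1 (T ω), X n ω)
    (lam : ℕ → ℝ) (hlam : ∀ j, lam j = 1 - Real.exp (-(π j * v)))
    (J : ℕ → ℝ)
    (hJ : ∀ k, J k = ∑ n ∈ Finset.Icc 1 k, π n * (1 - π n * v * (1 - lam n) / lam n))
    (R : ℕ → ℝ) (hR : ∀ k, R k = ∑ n ∈ Finset.Ico 1 k, π n / lam n) :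
    evariance (fun ω => (Y ω : ℝ)) μ
      = ENNReal.ofReal v * ∫⁻ ω, ENNReal.ofReal (J (T ω)) ∂μ
        + ENNReal.ofReal v ^ 2 * evariance (fun ω => R (T ω)) μ := by
  classical
  -- ## positivity facts
  have hπv : ∀ n, 1 ≤ n → 0 < π n * v := fun n hn => mul_pos (hπ n hn) hv
  have hexp_lt : ∀ n, 1 ≤ n → Real.exp (-(π n * v)) < 1 := by
    intro n hn
    have h := hπv n hn
    calc Real.exp (-(π n * v)) < Real.exp 0 := Real.exp_lt_exp.mpr (by linarith)
      _ = 1 := Real.exp_zero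
  have hlam_pos : ∀ n, 1 ≤ n → 0 < lam n := by
    intro n hn; rw [hlam n]; linarith [hexp_lt n hn]
  have hr_nonneg : ∀ n, 1 ≤ n → 0 ≤ π n / lam n :=
    fun n hn => (div_pos (hπ n hn) (hlam_pos n hn)).le
  have hb_nonneg : ∀ n, 1 ≤ n → 0 ≤ π n * (1 - π n * v * (1 - lam n) / lam n) := by
    intro n hn
    refine mul_nonneg (hπ n hn).le ?_
    rw [sub_nonneg, div_le_one (hlam_pos n hn), hlam n]
    have h1 : π n * v + 1 ≤ Real.exp (π n * v) := Real.add_one_le_exp _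
    have h3 : (0:ℝ) < Real.exp (π n * v) := Real.exp_pos _
    have h2 : Real.exp (-(π n * v)) = (Real.exp (π n * v))⁻¹ := Real.exp_neg _
    rw [h2]
    have h5 : (0:ℝ) < (Real.exp (π n * v))⁻¹ := inv_pos.mpr h3
    have h6 : Real.exp (π n * v) * (Real.exp (π n * v))⁻¹ = 1 := mul_inv_cancel₀ h3.ne'
    nlinarith
  have hR_nonneg : ∀ k, 0 ≤ R k := by
    intro k; rw [hR k]
    exact Finset.sum_nonneg fun n hn => hr_nonneg n (Finset.mem_Ico.mp hn).1
  -- ## single-coordinate integrals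
  have hIδ : ∀ t : ℕ, ∫⁻ ω, dlt (X (t + 1) ω) ∂μ = ENNReal.ofReal (lam (t + 1)) := by
    intro t
    have h := int_of_hasSum μ π v X hπ hv hXm hX t (fun m => if m = 0 then (0:ℝ) else 1)
      (fun m => by by_cases h : m = 0 <;> simp [h]) (hs_ppmf_pos (π (t + 1) * v))
    rw [hlam (t + 1), ← h]
    refine lintegral_congr fun ω => ?_
    by_cases h0 : X (t + 1) ω = 0 <;> simp [dlt, h0]
  have hI1 : ∀ t : ℕ, ∫⁻ ω, (X (t + 1) ω : ℝ≥0∞) ∂μ = ENNReal.ofReal (π (t + 1) * v) := by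
    intro t
    have h := int_of_hasSum μ π v X hπ hv hXm hX t (fun m => (m : ℝ))
      (fun m => Nat.cast_nonneg m) (hs_ppmf_mom1 (π (t + 1) * v))
    rw [← h]
    exact lintegral_congr fun ω => (ENNReal.ofReal_natCast _).symm
  have hI2 : ∀ t : ℕ, ∫⁻ ω, (X (t + 1) ω : ℝ≥0∞) ^ 2 ∂μ
      = ENNReal.ofReal (π (t + 1) * v + (π (t + 1) * v) ^ 2) := by
    intro t
    have h := int_of_hasSum μ π v X hπ hv hXm hX t (fun m => (m : ℝ) ^ 2)
      (fun m => sq_nonneg _) (hs_ppmf_mom2 (π (t + 1) * v))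
    rw [← h]
    refine lintegral_congr fun ω => ?_
    rw [ENNReal.ofReal_pow (Nat.cast_nonneg _), ENNReal.ofReal_natCast]
  have hcm : ∀ (g : ℕ → ℝ≥0∞) (n : ℕ), Measurable (fun ω => g (X n ω)) :=
    fun g n => (measurable_from_nat (f := g)).comp (hXm n)
  -- ## product formula for independent coordinates
  have hkey : ∀ (g : ℕ → ℕ → ℝ≥0∞) (s : Finset ℕ),
      ∫⁻ ω, ∏ t ∈ s, g t (X (t + 1) ω) ∂μ = ∏ t ∈ s, ∫⁻ ω, g t (X (t + 1) ω) ∂μ := by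
    intro g s
    have hcomp : iIndepFun (fun t ω => g t (X (t + 1) ω)) μ :=
      hindep.comp (fun t => g t) (fun t => measurable_from_nat)
    exact lintegral_indep_prod μ _ (fun t => measurable_from_nat.comp (hXm (t + 1))) hcomp s
  have hDm : ∀ k, Measurable (Dfun X k) := fun k =>
    Finset.measurable_prod _ fun t _ => hcm dlt (t + 1)
  have hDint : ∀ k, ∫⁻ ω, Dfun X k ω ∂μ = LamF lam k := by
    intro k
    rw [show (fun ω => Dfun X k ω) = fun ω => ∏ t ∈ Finset.range k, dlt (X (t + 1) ω) from rfl]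
    rw [hkey (fun _ m => dlt m) (Finset.range k)]
    exact Finset.prod_congr rfl fun t _ => hIδ t
  -- ## T facts
  have hTmes : Measurable T := T_measurable X T hXm hT
  have hlt : ∀ ω, (∃ n, 1 ≤ n ∧ X n ω = 0) →
      ∀ i, (i < T ω ↔ ∀ j, 1 ≤ j → j ≤ i → X j ω ≠ 0) :=
    fun ω hg i => T_lt_iff X T hT hg i
  have hDval : ∀ ω, (∃ n, 1 ≤ n ∧ X n ω = 0) →
      ∀ k, Dfun X k ω = if k < T ω then 1 else 0 := by
    intro ω hg k
    by_cases hk : k < T ω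
    · rw [if_pos hk]
      refine Finset.prod_eq_one fun t ht => ?_
      rw [Finset.mem_range] at ht
      have hne := (hlt ω hg k).mp hk (t + 1) (by omega) (by omega)
      simp [dlt, hne]
    · rw [if_neg hk]
      have hTmem := T_mem X T hT hg
      refine Finset.prod_eq_zero (i := T ω - 1) (Finset.mem_range.mpr (by omega)) ?_
      have he : T ω - 1 + 1 = T ω := by omega
      rw [he, hTmem.2]
      simp [dlt]
  -- ## pointwise series representation for Y
  have hptY : ∀ ω, (∃ n, 1 ≤ n ∧ X n ω = 0) →
      (Y ω : ℝ≥0∞) = ∑' i, ∏ t ∈ Finset.range (i + 1), gYF i t (X (t + 1) ω) := by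
    intro ω hg
    rw [hY ω, Nat.cast_sum, sum_Ico_one_eq_tsum (fun n => (X n ω : ℝ≥0∞)) (T ω)]
    refine tsum_congr fun i => ?_
    by_cases hc : i + 1 < T ω
    · rw [if_pos hc, Finset.prod_range_succ]
      have h1 : ∀ t ∈ Finset.range i, gYF i t (X (t + 1) ω) = 1 := by
        intro t ht
        rw [Finset.mem_range] at ht
        have hne := (hlt ω hg (i + 1)).mp hc (t + 1) (by omega) (by omega)
        have hti : ¬ t = i := by omega
        simp [gYF, dlt, hne, hti]
      rw [Finset.prod_eq_one h1, one_mul]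
      simp [gYF]
    · rw [if_neg hc]
      have hTmem := T_mem X T hT hg
      symm
      refine Finset.prod_eq_zero (i := T ω - 1) (Finset.mem_range.mpr (by omega)) ?_
      have he : T ω - 1 + 1 = T ω := by omega
      rw [he, hTmem.2]
      simp [gYF, dlt]
  have hintY : ∀ i, ∫⁻ ω, ∏ t ∈ Finset.range (i + 1), gYF i t (X (t + 1) ω) ∂μ
      = ENNReal.ofReal (π (i + 1) * v) * LamF lam i := by
    intro i
    rw [hkey (gYF i) (Finset.range (i + 1)), Finset.prod_range_succ]
    have h1 : ∀ t ∈ Finset.range i,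
        ∫⁻ ω, gYF i t (X (t + 1) ω) ∂μ = ENNReal.ofReal (lam (t + 1)) := by
      intro t ht
      rw [Finset.mem_range] at ht
      have he : ∀ m, gYF i t m = dlt m := by
        have hti : ¬ t = i := by omega
        exact fun m => by simp [gYF, hti]
      simp_rw [he]
      exact hIδ t
    have h2 : ∫⁻ ω, gYF i i (X (i + 1) ω) ∂μ = ENNReal.ofReal (π (i + 1) * v) := by
      have he : ∀ m, gYF i i m = (m : ℝ≥0∞) := fun m => by simp [gYF]
      simp_rw [he]
      exact hI1 i
    rw [Finset.prod_congr rfl h1, h2, mul_comm]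
    rfl
  have hLY : ∫⁻ ω, (Y ω : ℝ≥0∞) ∂μ
      = ∑' i, ENNReal.ofReal (π (i + 1) * v) * LamF lam i := by
    rw [lintegral_congr_ae (hTfin.mono fun ω hg => hptY ω hg)]
    rw [lintegral_tsum (f := fun i a => ∏ t ∈ Finset.range (i + 1), gYF i t (X (t + 1) a))
      (fun i => (Finset.measurable_prod _ fun t _ => hcm (gYF i t) (t + 1)).aemeasurable)]
    exact tsum_congr hintY
  -- ## series representation for R ∘ T
  have hptR : ∀ ω, (∃ n, 1 ≤ n ∧ X n ω = 0) →
      ENNReal.ofReal (R (T ω))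
        = ∑' i, ENNReal.ofReal (π (i + 1) / lam (i + 1)) * Dfun X (i + 1) ω := by
    intro ω hg
    rw [hR (T ω),
      ENNReal.ofReal_sum_of_nonneg (fun n hn => hr_nonneg n (Finset.mem_Ico.mp hn).1),
      sum_Ico_one_eq_tsum (fun n => ENNReal.ofReal (π n / lam n)) (T ω)]
    refine tsum_congr fun i => ?_
    rw [hDval ω hg (i + 1)]
    by_cases hc : i + 1 < T ω
    · rw [if_pos hc, if_pos hc, mul_one]
    · rw [if_neg hc, if_neg hc, mul_zero]
  have hLR : ∫⁻ ω, ENNReal.ofReal (R (T ω)) ∂μ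
      = ∑' i, ENNReal.ofReal (π (i + 1) / lam (i + 1)) * LamF lam (i + 1) := by
    rw [lintegral_congr_ae (hTfin.mono fun ω hg => hptR ω hg)]
    rw [lintegral_tsum (fun i => ((hDm (i + 1)).const_mul _).aemeasurable)]
    refine tsum_congr fun i => ?_
    rw [lintegral_const_mul _ (hDm (i + 1)), hDint (i + 1)]
  -- ## series representation for J ∘ T
  have hptJ : ∀ ω, (∃ n, 1 ≤ n ∧ X n ω = 0) →
      ENNReal.ofReal (J (T ω))
        = ∑' i, ENNReal.ofReal (π (i + 1) * (1 - π (i + 1) * v * (1 - lam (i + 1)) / lam (i + 1)))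
            * Dfun X i ω := by
    intro ω hg
    rw [hJ (T ω), ← Finset.Ico_add_one_right_eq_Icc,
      ENNReal.ofReal_sum_of_nonneg (fun n hn => hb_nonneg n (Finset.mem_Ico.mp hn).1),
      sum_Ico_one_eq_tsum
        (fun n => ENNReal.ofReal (π n * (1 - π n * v * (1 - lam n) / lam n))) (T ω + 1)]
    refine tsum_congr fun i => ?_
    rw [hDval ω hg i]
    by_cases hc : i < T ω
    · rw [if_pos (by omega), if_pos hc, mul_one]
    · rw [if_neg (by omega), if_neg hc, mul_zero]
  have hLJ : ∫⁻ ω, ENNReal.ofReal (J (T ω)) ∂μ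
      = ∑' i, ENNReal.ofReal (π (i + 1) * (1 - π (i + 1) * v * (1 - lam (i + 1)) / lam (i + 1)))
          * LamF lam i := by
    rw [lintegral_congr_ae (hTfin.mono fun ω hg => hptJ ω hg)]
    rw [lintegral_tsum (fun i => ((hDm i).const_mul _).aemeasurable)]
    refine tsum_congr fun i => ?_
    rw [lintegral_const_mul _ (hDm i), hDint i]
  -- ## pointwise product identity for pairs
  have hgp0 : ∀ (p : ℕ × ℕ) t, gpF p t 0 = 0 := by
    intro p t
    simp only [gpF, dlt]
    split_ifs <;> simp
  have hprodYY : ∀ ω, (∃ n, 1 ≤ n ∧ X n ω = 0) → ∀ i j : ℕ,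
      ∏ t ∈ Finset.range (max i j + 1), gpF (i, j) t (X (t + 1) ω)
        = if i + 1 < T ω ∧ j + 1 < T ω
            then (X (i + 1) ω : ℝ≥0∞) * (X (j + 1) ω : ℝ≥0∞) else 0 := by
    intro ω hg i j
    by_cases hM : max i j + 1 < T ω
    · have hci : i + 1 < T ω := by omega
      have hcj : j + 1 < T ω := by omega
      rw [if_pos ⟨hci, hcj⟩]
      have hδ1 : ∀ t, t < max i j + 1 → ¬ t = i → ¬ t = j →
          gpF (i, j) t (X (t + 1) ω) = 1 := by
        intro t ht hti htj
        have hne := (hlt ω hg (max i j + 1)).mp hM (t + 1) (by omega) (by omega)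
        simp [gpF, hti, htj, dlt, hne]
      rcases eq_or_ne i j with hij | hij
      · subst hij
        rw [← Finset.mul_prod_erase _ _ (Finset.mem_range.mpr (by omega : i < max i i + 1))]
        rw [Finset.prod_eq_one (fun t ht => by
          obtain ⟨h1, h2⟩ := Finset.mem_erase.mp ht
          exact hδ1 t (Finset.mem_range.mp h2) h1 h1), mul_one]
        simp [gpF, sq]
      · rw [prod_split₂ _ (Finset.mem_range.mpr (by omega : i < max i j + 1))
          (Finset.mem_range.mpr (by omega : j < max i j + 1)) hij]
        rw [Finset.prod_eq_one (fun t ht => by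
          obtain ⟨h1, h2⟩ := Finset.mem_erase.mp ht
          obtain ⟨h3, h4⟩ := Finset.mem_erase.mp h2
          exact hδ1 t (Finset.mem_range.mp h4) h3 h1), mul_one]
        have e1 : gpF (i, j) i (X (i + 1) ω) = (X (i + 1) ω : ℝ≥0∞) := by
          simp [gpF, hij]
        have e2 : gpF (i, j) j (X (j + 1) ω) = (X (j + 1) ω : ℝ≥0∞) := by
          simp [gpF, Ne.symm hij]
        rw [e1, e2]
    · rw [if_neg (by omega)]
      have hTmem := T_mem X T hT hg
      refine Finset.prod_eq_zero (i := T ω - 1) (Finset.mem_range.mpr (by omega)) ?_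
      have he : T ω - 1 + 1 = T ω := by omega
      rw [he, hTmem.2]
      exact hgp0 _ _
  -- ## pointwise series representation for Y ^ 2
  have hptY2 : ∀ ω, (∃ n, 1 ≤ n ∧ X n ω = 0) →
      (Y ω : ℝ≥0∞) ^ 2 = ∑' p : ℕ × ℕ,
        ∏ t ∈ Finset.range (max p.1 p.2 + 1), gpF p t (X (t + 1) ω) := by
    intro ω hg
    rw [ENNReal.tsum_prod']
    simp only [hprodYY ω hg]
    rw [hY ω, Nat.cast_sum, sq, Finset.sum_mul_sum]
    rw [sum_Ico_one_eq_tsum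
      (fun n => ∑ n' ∈ Finset.Ico 1 (T ω), (X n ω : ℝ≥0∞) * (X n' ω : ℝ≥0∞)) (T ω)]
    refine tsum_congr fun i => ?_
    by_cases hci : i + 1 < T ω
    · rw [if_pos hci, sum_Ico_one_eq_tsum
        (fun n' => (X (i + 1) ω : ℝ≥0∞) * (X n' ω : ℝ≥0∞)) (T ω)]
      refine tsum_congr fun j => ?_
      by_cases hcj : j + 1 < T ω
      · rw [if_pos hcj, if_pos ⟨hci, hcj⟩]
      · rw [if_neg hcj, if_neg (fun h => hcj h.2)]
    · rw [if_neg hci]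
      symm
      simp only [if_neg (fun h => hci (And.left h))]
      exact tsum_zero
  -- ## integral of each pair term
  have hIt : ∀ (p : ℕ × ℕ) t, ¬ t = p.1 → ¬ t = p.2 →
      ∫⁻ ω, gpF p t (X (t + 1) ω) ∂μ = ENNReal.ofReal (lam (t + 1)) := by
    intro p t h1 h2
    have he : ∀ m, gpF p t m = dlt m := fun m => by simp [gpF, h1, h2]
    simp_rw [he]
    exact hIδ t
  have hclaim : ∀ p : ℕ × ℕ,
      ∫⁻ ω, ∏ t ∈ Finset.range (max p.1 p.2 + 1), gpF p t (X (t + 1) ω) ∂μ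
        = ENNReal.ofReal v *
            (if p.1 = p.2
              then ENNReal.ofReal
                (π (p.1 + 1) * (1 - π (p.1 + 1) * v * (1 - lam (p.1 + 1)) / lam (p.1 + 1)))
                * LamF lam p.1
              else 0)
          + ENNReal.ofReal v ^ 2 *
            (ENNReal.ofReal (π (p.1 + 1) / lam (p.1 + 1))
              * ENNReal.ofReal (π (p.2 + 1) / lam (p.2 + 1)) * LamF lam (max p.1 p.2 + 1)) := by
    intro p
    obtain ⟨i, j⟩ := p
    dsimp only
    rw [hkey]
    rcases eq_or_ne i j with hij | hij
    · subst hij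
      simp only [max_self]
      rw [← Finset.mul_prod_erase _ _ (Finset.mem_range.mpr (by omega : i < i + 1))]
      have herase : (Finset.range (i + 1)).erase i = Finset.range i := by
        rw [Finset.range_add_one, Finset.erase_insert (by simp)]
      rw [herase]
      have hfi : ∫⁻ ω, gpF (i, i) i (X (i + 1) ω) ∂μ
          = ENNReal.ofReal (π (i + 1) * v + (π (i + 1) * v) ^ 2) := by
        have he : ∀ m, gpF (i, i) i m = (m : ℝ≥0∞) ^ 2 := fun m => by simp [gpF]
        simp_rw [he]
        exact hI2 i
      rw [hfi, Finset.prod_congr rfl (fun t ht =>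
        hIt (i, i) t (by rw [Finset.mem_range] at ht; omega)
          (by rw [Finset.mem_range] at ht; omega))]
      simp only [if_true]
      have hLam_succ : LamF lam (i + 1) = LamF lam i * ENNReal.ofReal (lam (i + 1)) := by
        rw [LamF, LamF, Finset.prod_range_succ]
      rw [hLam_succ]
      have hb := hb_nonneg (i + 1) (by omega)
      have hrn := hr_nonneg (i + 1) (by omega)
      have hl := (hlam_pos (i + 1) (by omega)).le
      have hcoef : ENNReal.ofReal (π (i + 1) * v + (π (i + 1) * v) ^ 2)
          = ENNReal.ofReal v
              * ENNReal.ofReal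
                (π (i + 1) * (1 - π (i + 1) * v * (1 - lam (i + 1)) / lam (i + 1)))
            + ENNReal.ofReal v ^ 2 *
              (ENNReal.ofReal (π (i + 1) / lam (i + 1))
                * ENNReal.ofReal (π (i + 1) / lam (i + 1)) * ENNReal.ofReal (lam (i + 1))) := by
        rw [← ENNReal.ofReal_mul hv.le, ← ENNReal.ofReal_pow hv.le,
          ← ENNReal.ofReal_mul hrn, ← ENNReal.ofReal_mul (mul_nonneg hrn hrn),
          ← ENNReal.ofReal_mul (sq_nonneg v),
          ← ENNReal.ofReal_add (mul_nonneg hv.le hb) (by positivity)]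
        congr 1
        have hlne : lam (i + 1) ≠ 0 := (hlam_pos (i + 1) (by omega)).ne'
        field_simp
        ring
      rw [hcoef, add_mul]
      simp only [LamF]
      ring
    · rw [prod_split₂ _ (Finset.mem_range.mpr (by omega : i < max i j + 1))
        (Finset.mem_range.mpr (by omega : j < max i j + 1)) hij]
      have e1 : ∫⁻ ω, gpF (i, j) i (X (i + 1) ω) ∂μ = ENNReal.ofReal (π (i + 1) * v) := by
        have he : ∀ m, gpF (i, j) i m = (m : ℝ≥0∞) := fun m => by simp [gpF, hij]
        simp_rw [he]
        exact hI1 i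
      have e2 : ∫⁻ ω, gpF (i, j) j (X (j + 1) ω) ∂μ = ENNReal.ofReal (π (j + 1) * v) := by
        have he : ∀ m, gpF (i, j) j m = (m : ℝ≥0∞) := fun m => by simp [gpF, Ne.symm hij]
        simp_rw [he]
        exact hI1 j
      rw [e1, e2, Finset.prod_congr rfl (fun t ht => by
        obtain ⟨h1, h2⟩ := Finset.mem_erase.mp ht
        obtain ⟨h3, _⟩ := Finset.mem_erase.mp h2
        exact hIt (i, j) t h3 h1)]
      rw [if_neg hij, mul_zero, zero_add]
      have hsplit : LamF lam (max i j + 1)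
          = ENNReal.ofReal (lam (i + 1)) * ENNReal.ofReal (lam (j + 1)) *
              ∏ t ∈ ((Finset.range (max i j + 1)).erase i).erase j,
                ENNReal.ofReal (lam (t + 1)) := by
        rw [LamF]
        exact prod_split₂ _ (Finset.mem_range.mpr (by omega : i < max i j + 1))
          (Finset.mem_range.mpr (by omega : j < max i j + 1)) hij
      rw [hsplit]
      have hri := hr_nonneg (i + 1) (by omega)
      have hrj := hr_nonneg (j + 1) (by omega)
      have hli := (hlam_pos (i + 1) (by omega))
      have hlj := (hlam_pos (j + 1) (by omega))
      have hcoef : ENNReal.ofReal (π (i + 1) * v) * ENNReal.ofReal (π (j + 1) * v)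
          = ENNReal.ofReal v ^ 2 *
            (ENNReal.ofReal (π (i + 1) / lam (i + 1)) * ENNReal.ofReal (π (j + 1) / lam (j + 1))
              * (ENNReal.ofReal (lam (i + 1)) * ENNReal.ofReal (lam (j + 1)))) := by
        rw [← ENNReal.ofReal_pow hv.le, ← ENNReal.ofReal_mul hli.le,
          ← ENNReal.ofReal_mul hri, ← ENNReal.ofReal_mul (mul_nonneg hri hrj),
          ← ENNReal.ofReal_mul (sq_nonneg v),
          ← ENNReal.ofReal_mul (mul_nonneg (hπ (i + 1) (by omega)).le hv.le)]
        congr 1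
        field_simp
      calc ENNReal.ofReal (π (i + 1) * v) * ENNReal.ofReal (π (j + 1) * v) *
            ∏ t ∈ ((Finset.range (max i j + 1)).erase i).erase j, ENNReal.ofReal (lam (t + 1))
          = ENNReal.ofReal v ^ 2 *
            (ENNReal.ofReal (π (i + 1) / lam (i + 1)) * ENNReal.ofReal (π (j + 1) / lam (j + 1))
              * (ENNReal.ofReal (lam (i + 1)) * ENNReal.ofReal (lam (j + 1)) *
                ∏ t ∈ ((Finset.range (max i j + 1)).erase i).erase j,
                  ENNReal.ofReal (lam (t + 1)))) := by
            rw [hcoef]; ring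
        _ = _ := by ring
  -- ## series representation for (R ∘ T) ^ 2
  have hptR2 : ∀ ω, (∃ n, 1 ≤ n ∧ X n ω = 0) →
      ENNReal.ofReal (R (T ω)) ^ 2 = ∑' p : ℕ × ℕ,
        ENNReal.ofReal (π (p.1 + 1) / lam (p.1 + 1)) * ENNReal.ofReal (π (p.2 + 1) / lam (p.2 + 1))
          * Dfun X (max p.1 p.2 + 1) ω := by
    intro ω hg
    rw [ENNReal.tsum_prod']
    rw [hR (T ω),
      ENNReal.ofReal_sum_of_nonneg (fun n hn => hr_nonneg n (Finset.mem_Ico.mp hn).1), sq,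
      Finset.sum_mul_sum]
    rw [sum_Ico_one_eq_tsum (fun n => ∑ n' ∈ Finset.Ico 1 (T ω),
      ENNReal.ofReal (π n / lam n) * ENNReal.ofReal (π n' / lam n')) (T ω)]
    refine tsum_congr fun i => ?_
    by_cases hci : i + 1 < T ω
    · rw [if_pos hci, sum_Ico_one_eq_tsum (fun n' =>
        ENNReal.ofReal (π (i + 1) / lam (i + 1)) * ENNReal.ofReal (π n' / lam n')) (T ω)]
      refine tsum_congr fun j => ?_
      dsimp only
      rw [hDval ω hg (max i j + 1)]
      by_cases hcj : j + 1 < T ω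
      · rw [if_pos hcj, if_pos (by omega), mul_one]
      · rw [if_neg hcj, if_neg (by omega), mul_zero]
    · rw [if_neg hci]
      symm
      have hz : ∀ j : ℕ, ENNReal.ofReal (π (i + 1) / lam (i + 1))
          * ENNReal.ofReal (π (j + 1) / lam (j + 1)) * Dfun X (max i j + 1) ω = 0 := by
        intro j
        rw [hDval ω hg (max i j + 1), if_neg (by omega), mul_zero]
      calc (∑' j : ℕ, ENNReal.ofReal (π (i + 1) / lam (i + 1))
          * ENNReal.ofReal (π (j + 1) / lam (j + 1)) * Dfun X (max i j + 1) ω)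
          = ∑' _j : ℕ, (0 : ℝ≥0∞) := tsum_congr hz
        _ = 0 := tsum_zero
  have hLR2 : ∫⁻ ω, ENNReal.ofReal (R (T ω)) ^ 2 ∂μ = ∑' p : ℕ × ℕ,
      ENNReal.ofReal (π (p.1 + 1) / lam (p.1 + 1)) * ENNReal.ofReal (π (p.2 + 1) / lam (p.2 + 1))
        * LamF lam (max p.1 p.2 + 1) := by
    rw [lintegral_congr_ae (hTfin.mono fun ω hg => hptR2 ω hg)]
    rw [lintegral_tsum (fun p => ((hDm _).const_mul _).aemeasurable)]
    refine tsum_congr fun p => ?_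
    rw [lintegral_const_mul _ (hDm _), hDint]
  -- ## the main second-moment identity
  have hLY2 : ∫⁻ ω, (Y ω : ℝ≥0∞) ^ 2 ∂μ
      = ENNReal.ofReal v * ∫⁻ ω, ENNReal.ofReal (J (T ω)) ∂μ
        + ENNReal.ofReal v ^ 2 * ∫⁻ ω, ENNReal.ofReal (R (T ω)) ^ 2 ∂μ := by
    rw [lintegral_congr_ae (hTfin.mono fun ω hg => hptY2 ω hg)]
    rw [lintegral_tsum (fun p => (Finset.measurable_prod _ fun t _ =>
      hcm (gpF p t) (t + 1)).aemeasurable)]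
    rw [tsum_congr hclaim, ENNReal.tsum_add, ENNReal.tsum_mul_left, ENNReal.tsum_mul_left]
    congr 2
    · rw [hLJ, ENNReal.tsum_prod']
      refine tsum_congr fun i => ?_
      rw [tsum_eq_single i (fun b hb => if_neg (fun h => hb h.symm))]
      rw [if_pos rfl]
    · exact hLR2.symm
  -- ## the first-moment identity
  have hI1eq : ∫⁻ ω, (Y ω : ℝ≥0∞) ∂μ
      = ENNReal.ofReal v * ∫⁻ ω, ENNReal.ofReal (R (T ω)) ∂μ := by
    rw [hLY, hLR, ← ENNReal.tsum_mul_left]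
    refine tsum_congr fun i => ?_
    have hLam_succ : LamF lam (i + 1) = LamF lam i * ENNReal.ofReal (lam (i + 1)) := by
      rw [LamF, LamF, Finset.prod_range_succ]
    rw [hLam_succ]
    have hri := hr_nonneg (i + 1) (by omega)
    have hli := hlam_pos (i + 1) (by omega)
    have hc : ENNReal.ofReal (π (i + 1) * v)
        = ENNReal.ofReal v * ENNReal.ofReal (π (i + 1) / lam (i + 1))
            * ENNReal.ofReal (lam (i + 1)) := by
      rw [← ENNReal.ofReal_mul hv.le, ← ENNReal.ofReal_mul (mul_nonneg hv.le hri)]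
      congr 1
      field_simp
    rw [hc]
    ring
  -- ## final assembly
  have hYmeas : Measurable Y := Y_measurable X T hXm hTmes Y hY
  have hYr_meas : Measurable (fun ω => (Y ω : ℝ)) :=
    (measurable_from_nat (f := fun n : ℕ => (n : ℝ))).comp hYmeas
  have hRT_meas : Measurable (fun ω => R (T ω)) := (measurable_from_nat (f := R)).comp hTmes
  have hYae : AEStronglyMeasurable (fun ω => (Y ω : ℝ)) μ := hYr_meas.aestronglyMeasurable
  have hRae : AEStronglyMeasurable (fun ω => R (T ω)) μ := hRT_meas.aestronglyMeasurable
  rw [evariance_def' hYae, evariance_def' hRae]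
  have hnY : ∫⁻ ω, ‖(Y ω : ℝ)‖ₑ ^ 2 ∂μ = ∫⁻ ω, (Y ω : ℝ≥0∞) ^ 2 ∂μ := by
    refine lintegral_congr fun ω => ?_
    rw [Real.enorm_eq_ofReal (Nat.cast_nonneg _), ENNReal.ofReal_natCast]
  have hnR : ∫⁻ ω, ‖R (T ω)‖ₑ ^ 2 ∂μ
      = ∫⁻ ω, ENNReal.ofReal (R (T ω)) ^ 2 ∂μ := by
    refine lintegral_congr fun ω => ?_
    rw [Real.enorm_eq_ofReal (hR_nonneg _)]
  rw [hnY, hnR, hLY2]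
  have hEY : ENNReal.ofReal ((∫ ω, (Y ω : ℝ) ∂μ) ^ 2)
      = ENNReal.ofReal v ^ 2 * ENNReal.ofReal ((∫ ω, R (T ω) ∂μ) ^ 2) := by
    by_cases hfin : (∫⁻ ω, (Y ω : ℝ≥0∞) ∂μ) = ∞
    · have hRfin : (∫⁻ ω, ENNReal.ofReal (R (T ω)) ∂μ) = ∞ := by
        by_contra hc
        rw [hI1eq] at hfin
        exact (ENNReal.mul_ne_top ENNReal.ofReal_ne_top hc) hfin
      have h1 : ¬ Integrable (fun ω => (Y ω : ℝ)) μ := by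
        intro hint
        have h2 := (hasFiniteIntegral_iff_ofReal
          (ae_of_all _ fun ω => Nat.cast_nonneg (Y ω))).mp hint.2
        simp_rw [ENNReal.ofReal_natCast] at h2
        rw [hfin] at h2
        exact absurd h2 (lt_irrefl _)
      have h2 : ¬ Integrable (fun ω => R (T ω)) μ := by
        intro hint
        have h3 := (hasFiniteIntegral_iff_ofReal
          (ae_of_all _ fun ω => hR_nonneg (T ω))).mp hint.2
        rw [hRfin] at h3
        exact absurd h3 (lt_irrefl _)
      rw [integral_undef h1, integral_undef h2]
      simp
    · have hRfin : (∫⁻ ω, ENNReal.ofReal (R (T ω)) ∂μ) ≠ ∞ := by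
        intro hc
        rw [hI1eq, hc, ENNReal.mul_top
          (by simpa using (ENNReal.ofReal_pos.mpr hv).ne')] at hfin
        exact hfin rfl
      have hYint : ∫ ω, (Y ω : ℝ) ∂μ = (∫⁻ ω, (Y ω : ℝ≥0∞) ∂μ).toReal := by
        rw [integral_eq_lintegral_of_nonneg_ae (ae_of_all _ fun ω => Nat.cast_nonneg (Y ω)) hYae]
        congr 1
        exact lintegral_congr fun ω => ENNReal.ofReal_natCast _
      have hRint : ∫ ω, R (T ω) ∂μ = (∫⁻ ω, ENNReal.ofReal (R (T ω)) ∂μ).toReal := by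
        rw [integral_eq_lintegral_of_nonneg_ae (ae_of_all _ fun ω => hR_nonneg (T ω)) hRae]
      have hEY1 : ∫ ω, (Y ω : ℝ) ∂μ = v * ∫ ω, R (T ω) ∂μ := by
        rw [hYint, hRint, hI1eq, ENNReal.toReal_mul, ENNReal.toReal_ofReal hv.le]
      rw [hEY1, mul_pow, ENNReal.ofReal_mul (sq_nonneg v), ENNReal.ofReal_pow hv.le]
  rw [hEY]
  have hC : ENNReal.ofReal ((∫ ω, R (T ω) ∂μ) ^ 2) ≤ ∫⁻ ω, ENNReal.ofReal (R (T ω)) ^ 2 ∂μ := by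
    by_cases hB : (∫⁻ ω, ENNReal.ofReal (R (T ω)) ^ 2 ∂μ) = ∞
    · rw [hB]; exact le_top
    · have hRsq_meas : Measurable (fun ω => (R (T ω)) ^ 2) := hRT_meas.pow_const 2
      have hofr : ∀ ω, ENNReal.ofReal ((R (T ω)) ^ 2) = ENNReal.ofReal (R (T ω)) ^ 2 := fun ω =>
        ENNReal.ofReal_pow (hR_nonneg _) 2
      have hmem : MemLp (fun ω => R (T ω)) 2 μ := by
        rw [memLp_two_iff_integrable_sq hRae]
        refine ⟨hRsq_meas.aestronglyMeasurable, ?_⟩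
        rw [hasFiniteIntegral_iff_ofReal (ae_of_all _ fun ω => sq_nonneg _)]
        simp_rw [hofr]
        exact lt_of_le_of_ne le_top fun h => hB h
      have hvar := variance_nonneg (fun ω => R (T ω)) μ
      rw [variance_eq_sub hmem] at hvar
      have hpi : μ[(fun ω => R (T ω)) ^ 2] = ∫ ω, (R (T ω)) ^ 2 ∂μ := rfl
      rw [hpi] at hvar
      have hsq : (∫ ω, R (T ω) ∂μ) ^ 2 ≤ ∫ ω, (R (T ω)) ^ 2 ∂μ := by linarith
      calc ENNReal.ofReal ((∫ ω, R (T ω) ∂μ) ^ 2)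
          ≤ ENNReal.ofReal (∫ ω, (R (T ω)) ^ 2 ∂μ) := ENNReal.ofReal_le_ofReal hsq
        _ = ∫⁻ ω, ENNReal.ofReal (R (T ω)) ^ 2 ∂μ := by
            rw [integral_eq_lintegral_of_nonneg_ae (ae_of_all _ fun ω => sq_nonneg _)
              hRsq_meas.aestronglyMeasurable]
            simp_rw [hofr]
            exact ENNReal.ofReal_toReal hB
  obtain ⟨Dd, hDd⟩ : ∃ Dd, (∫⁻ ω, ENNReal.ofReal (R (T ω)) ^ 2 ∂μ)
      = Dd + ENNReal.ofReal ((∫ ω, R (T ω) ∂μ) ^ 2) :=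
    ⟨_ - _, (tsub_add_cancel_of_le hC).symm⟩
  rw [hDd, ENNReal.add_sub_cancel_right ENNReal.ofReal_ne_top, mul_add, ← add_assoc,
    ENNReal.add_sub_cancel_right
      (ENNReal.mul_ne_top (ENNReal.pow_ne_top ENNReal.ofReal_ne_top) ENNReal.ofReal_ne_top)]
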